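/- arXiv:2110.06482 — 2 statements merged into one kernel-verified Lean document; each statement's English description precedes it below -/
import Mathlib

section
/- Let X ∈ ℝ^{N×d}, Y ∈ ℝ^{N×K} with Y in the range of X (XX†Y = Y). Then max over Λ ∈ ℝ^{N×K} with ‖ΛᵀX‖₂ ≤ c of tr(ΛᵀY) equals c·‖X†Y‖_*, where ‖·‖_* is the nuclear norm and ‖·‖₂ the spectral norm. -/
open Matrix

/-- Euclidean norm of a vector. -/
noncomputable def vecNorm {n : ℕ} (v : Fin n → ℝ) : ℝ := Real.sqrt (∑ i, (v i) ^ 2)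

/-- Spectral (operator) norm of a real matrix. -/
noncomputable def specNorm {a b : ℕ} (M : Matrix (Fin a) (Fin b) ℝ) : ℝ :=
  sSup {x : ℝ | ∃ v : Fin b → ℝ, vecNorm v ≤ 1 ∧ x = vecNorm (M.mulVec v)}

section Aux

lemma dot_self_nonneg' {n : ℕ} (v : Fin n → ℝ) : 0 ≤ v ⬝ᵥ v :=
  Finset.sum_nonneg fun _ _ => mul_self_nonneg _

lemma vecNorm_eq_sqrt_dot {n : ℕ} (v : Fin n → ℝ) : vecNorm v = Real.sqrt (v ⬝ᵥ v) := by
  simp [vecNorm, dotProduct, sq]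

lemma vecNorm_nonneg' {n : ℕ} (v : Fin n → ℝ) : 0 ≤ vecNorm v := Real.sqrt_nonneg _

lemma vecNorm_sq {n : ℕ} (v : Fin n → ℝ) : vecNorm v ^ 2 = v ⬝ᵥ v := by
  rw [vecNorm_eq_sqrt_dot, Real.sq_sqrt (dot_self_nonneg' v)]

lemma abs_dot_le {n : ℕ} (u w : Fin n → ℝ) : |u ⬝ᵥ w| ≤ vecNorm u * vecNorm w := by
  have h := Finset.sum_mul_sq_le_sq_mul_sq Finset.univ u w
  have h2 : |u ⬝ᵥ w| = Real.sqrt ((u ⬝ᵥ w)^2) := (Real.sqrt_sq_eq_abs _).symm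
  rw [h2, vecNorm, vecNorm, ← Real.sqrt_mul (Finset.sum_nonneg fun _ _ => sq_nonneg _)]
  exact Real.sqrt_le_sqrt (by simpa [dotProduct] using h)

lemma vecNorm_smul {n : ℕ} (t : ℝ) (v : Fin n → ℝ) : vecNorm (t • v) = |t| * vecNorm v := by
  rw [vecNorm_eq_sqrt_dot, vecNorm_eq_sqrt_dot, smul_dotProduct, dotProduct_smul,
    smul_eq_mul, smul_eq_mul, ← mul_assoc, ← sq, Real.sqrt_mul (sq_nonneg t),
    Real.sqrt_sq_eq_abs]

lemma vecNorm_zero' {n : ℕ} : vecNorm (0 : Fin n → ℝ) = 0 := by simp [vecNorm]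

lemma specNorm_bddAbove {a b : ℕ} (M : Matrix (Fin a) (Fin b) ℝ) :
    BddAbove {x : ℝ | ∃ v : Fin b → ℝ, vecNorm v ≤ 1 ∧ x = vecNorm (M.mulVec v)} := by
  refine ⟨Real.sqrt (∑ i, ∑ j, M i j ^ 2), ?_⟩
  rintro x ⟨v, hv, rfl⟩
  rw [vecNorm]
  apply Real.sqrt_le_sqrt
  have hv2 : ∑ j, v j ^ 2 ≤ 1 := by
    have h1 : v ⬝ᵥ v ≤ 1 := by rw [← vecNorm_sq]; nlinarith [vecNorm_nonneg' v]
    simpa [dotProduct, sq] using h1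
  calc ∑ i, (M *ᵥ v) i ^ 2 = ∑ i, (∑ j, M i j * v j) ^ 2 := rfl
    _ ≤ ∑ i, (∑ j, M i j ^ 2) * (∑ j, v j ^ 2) :=
        Finset.sum_le_sum fun i _ => Finset.sum_mul_sq_le_sq_mul_sq _ _ _
    _ ≤ ∑ i, (∑ j, M i j ^ 2) * 1 :=
        Finset.sum_le_sum fun i _ => mul_le_mul_of_nonneg_left hv2
          (Finset.sum_nonneg fun _ _ => sq_nonneg _)
    _ = ∑ i, ∑ j, M i j ^ 2 := by simp

lemma le_specNorm {a b : ℕ} (M : Matrix (Fin a) (Fin b) ℝ) (v : Fin b → ℝ)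
    (hv : vecNorm v ≤ 1) : vecNorm (M *ᵥ v) ≤ specNorm M :=
  le_csSup (specNorm_bddAbove M) ⟨v, hv, rfl⟩

lemma specNorm_le {a b : ℕ} (M : Matrix (Fin a) (Fin b) ℝ) {c : ℝ}
    (h : ∀ v, vecNorm v ≤ 1 → vecNorm (M *ᵥ v) ≤ c) : specNorm M ≤ c := by
  refine csSup_le ⟨vecNorm (M *ᵥ 0), 0, by simp [vecNorm_zero'], rfl⟩ ?_
  rintro x ⟨v, hv, rfl⟩; exact h v hv

lemma vecNorm_mulVec_le {a b : ℕ} (M : Matrix (Fin a) (Fin b) ℝ) (v : Fin b → ℝ) :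
    vecNorm (M *ᵥ v) ≤ specNorm M * vecNorm v := by
  rcases eq_or_ne (vecNorm v) 0 with h0 | h0
  · have hv0 : v = 0 := by
      have h1 : v ⬝ᵥ v = 0 := by
        have := vecNorm_sq v; rw [h0] at this; linarith [this]
      exact (dotProduct_self_eq_zero).mp h1
    simp [hv0, vecNorm_zero']
  · have hpos : 0 < vecNorm v := lt_of_le_of_ne (vecNorm_nonneg' v) (Ne.symm h0)
    have h1 : vecNorm ((vecNorm v)⁻¹ • v) = 1 := by
      rw [vecNorm_smul, abs_of_nonneg (inv_nonneg.2 hpos.le), inv_mul_cancel₀ h0]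
    have h2 := le_specNorm M _ h1.le
    rw [mulVec_smul, vecNorm_smul, abs_of_nonneg (inv_nonneg.2 hpos.le)] at h2
    calc vecNorm (M *ᵥ v) = ((vecNorm v)⁻¹ * vecNorm (M *ᵥ v)) * vecNorm v := by
          field_simp
      _ ≤ specNorm M * vecNorm v := mul_le_mul_of_nonneg_right h2 hpos.le

lemma vecMulVec_mul' {a b : ℕ} (v : Fin a → ℝ) (u : Fin b → ℝ)
    (B : Matrix (Fin b) (Fin b) ℝ) : vecMulVec v u * B = vecMulVec v (u ᵥ* B) := by
  ext i k; simp [vecMulVec, mul_apply, vecMul, dotProduct, Finset.mul_sum, mul_assoc]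

lemma vecMulVec_mulVec' {a b : ℕ} (v : Fin a → ℝ) (u : Fin b → ℝ) (x : Fin b → ℝ) :
    vecMulVec v u *ᵥ x = (u ⬝ᵥ x) • v := by
  ext i
  simp only [vecMulVec, mulVec, of_apply, dotProduct, Pi.smul_apply, smul_eq_mul,
    Finset.sum_mul, Finset.mul_sum]
  exact Finset.sum_congr rfl fun j _ => by ring

lemma trace_vecMulVec_mul {a b : ℕ} (v : Fin a → ℝ) (u : Fin b → ℝ)
    (A : Matrix (Fin b) (Fin a) ℝ) : (vecMulVec v u * A).trace = u ⬝ᵥ (A *ᵥ v) := by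
  simp only [trace, diag, mul_apply, vecMulVec, of_apply, mulVec, dotProduct,
    Finset.mul_sum]
  rw [Finset.sum_comm]
  exact Finset.sum_congr rfl fun l _ => Finset.sum_congr rfl fun k _ => by ring

end Aux

lemma sum_dotProduct' {n : ℕ} {ι : Type*} (s : Finset ι) (f : ι → (Fin n → ℝ))
    (w : Fin n → ℝ) : (∑ i ∈ s, f i) ⬝ᵥ w = ∑ i ∈ s, f i ⬝ᵥ w := by
  simp only [dotProduct, Finset.sum_apply, Finset.sum_mul]
  rw [Finset.sum_comm]

lemma dotProduct_sum' {n : ℕ} {ι : Type*} (s : Finset ι) (w : Fin n → ℝ)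
    (f : ι → (Fin n → ℝ)) : w ⬝ᵥ (∑ i ∈ s, f i) = ∑ i ∈ s, w ⬝ᵥ f i := by
  simp only [dotProduct, Finset.sum_apply, Finset.mul_sum]
  rw [Finset.sum_comm]

lemma sum_mulVec' {a b : ℕ} {ι : Type*} (s : Finset ι) (M : ι → Matrix (Fin a) (Fin b) ℝ)
    (x : Fin b → ℝ) : (∑ i ∈ s, M i) *ᵥ x = ∑ i ∈ s, (M i *ᵥ x) := by
  ext k
  simp only [mulVec, dotProduct, Matrix.sum_apply, Finset.sum_apply, Finset.sum_mul]
  rw [Finset.sum_comm]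

/-- The `j`-th singular value (unsorted) of a real matrix. -/
noncomputable def singVal {a b : ℕ} (M : Matrix (Fin a) (Fin b) ℝ) (j : Fin b) : ℝ :=
  Real.sqrt ((show (Mᵀ * M).IsHermitian by
    simpa using Matrix.isHermitian_conjTranspose_mul_self M).eigenvalues j)

/-- Nuclear norm of a real matrix: sum of its singular values. -/
noncomputable def nuclearNorm {a b : ℕ} (M : Matrix (Fin a) (Fin b) ℝ) : ℝ :=
  ∑ j, singVal M j

/-- `Xd` is the Moore–Penrose pseudoinverse of `X` (the four Penrose conditions). -/
def IsMoorePenrose {a b : ℕ} (X : Matrix (Fin a) (Fin b) ℝ) (Xd : Matrix (Fin b) (Fin a) ℝ) : Prop :=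
  X * Xd * X = X ∧ Xd * X * Xd = Xd ∧ (X * Xd)ᵀ = X * Xd ∧ (Xd * X)ᵀ = Xd * X

set_option maxHeartbeats 1600000

/-- If `Y` is in the range of `X` (`X X† Y = Y`), then the maximum of
`tr(Λᵀ Y)` over `Λ` with `‖Λᵀ X‖₂ ≤ c` equals `c · ‖X† Y‖_*`. -/
theorem dual_linear_max_eq_nuclear
    (N d K : ℕ) (c : ℝ) (hc : 0 < c)
    (X : Matrix (Fin N) (Fin d) ℝ) (Y : Matrix (Fin N) (Fin K) ℝ)
    (Xd : Matrix (Fin d) (Fin N) ℝ) (hXd : IsMoorePenrose X Xd)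
    (hY : X * (Xd * Y) = Y) :
    IsGreatest {x : ℝ | ∃ Λ : Matrix (Fin N) (Fin K) ℝ,
        specNorm (Λᵀ * X) ≤ c ∧ x = (Λᵀ * Y).trace}
      (c * nuclearNorm (Xd * Y)) := by
  obtain ⟨hP1, hP2, hP3, hP4⟩ := hXd
  set A : Matrix (Fin d) (Fin K) ℝ := Xd * Y with hAdef
  have hB : (Aᵀ * A).IsHermitian := by simpa using Matrix.isHermitian_conjTranspose_mul_self A
  set μ : Fin K → ℝ := hB.eigenvalues with hμdef
  set v : Fin K → (Fin K → ℝ) := fun j => ⇑(hB.eigenvectorBasis j) with hvdef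
  have hμ0 : ∀ j, 0 ≤ μ j := by
    intro j
    have h := Matrix.posSemidef_conjTranspose_mul_self A
    rw [conjTranspose_eq_transpose_of_trivial] at h
    exact h.eigenvalues_nonneg j
  have hσ : ∀ j, singVal A j = Real.sqrt (μ j) := fun j => rfl
  have hσ0 : ∀ j, 0 ≤ singVal A j := fun j => Real.sqrt_nonneg _
  have hσsq : ∀ j, singVal A j ^ 2 = μ j := fun j => by
    rw [hσ]; exact Real.sq_sqrt (hμ0 j)
  have heig : ∀ j, (Aᵀ * A) *ᵥ v j = μ j • v j := fun j => hB.mulVec_eigenvectorBasis j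
  have horth : ∀ i j, v i ⬝ᵥ v j = if i = j then 1 else 0 := by
    intro i j
    have h := (orthonormal_iff_ite.mp hB.eigenvectorBasis.orthonormal) i j
    rw [PiLp.inner_apply] at h
    simp [dotProduct] at h
    rw [dotProduct]
    exact (Finset.sum_congr rfl fun k _ => mul_comm _ _).trans h
  have hAvAv : ∀ i j, (A *ᵥ v i) ⬝ᵥ (A *ᵥ v j) = μ j * (if i = j then 1 else 0) := by
    intro i j
    have h : (A *ᵥ v i) ⬝ᵥ (A *ᵥ v j) = v i ⬝ᵥ ((Aᵀ * A) *ᵥ v j) := by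
      conv_rhs => rw [← mulVec_mulVec, dotProduct_mulVec, vecMul_transpose]
    rw [h, heig, dotProduct_smul, smul_eq_mul, horth]
  have hAv0 : ∀ j, μ j = 0 → A *ᵥ v j = 0 := by
    intro j h
    apply dotProduct_self_eq_zero.mp
    rw [hAvAv j j, h, zero_mul]
  set u : Fin K → (Fin d → ℝ) := fun j => (singVal A j)⁻¹ • (A *ᵥ v j) with hudef
  have hu0 : ∀ j, μ j = 0 → u j = 0 := by
    intro j h; rw [hudef]; simp [hAv0 j h]
  have hσne : ∀ j, μ j ≠ 0 → singVal A j ≠ 0 := by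
    intro j h h0; exact h (by rw [← hσsq j, h0]; ring)
  have hAvσ : ∀ j, A *ᵥ v j = singVal A j • u j := by
    intro j
    rcases eq_or_ne (μ j) 0 with h | h
    · rw [hAv0 j h, hudef]; simp [hAv0 j h]
    · rw [hudef]; rw [smul_smul, mul_inv_cancel₀ (hσne j h), one_smul]
  have huu : ∀ i j, u i ⬝ᵥ u j = if i = j then (if μ j = 0 then 0 else 1) else 0 := by
    intro i j
    have h : u i ⬝ᵥ u j
        = (singVal A i)⁻¹ * ((singVal A j)⁻¹ * (μ j * (if i = j then 1 else 0))) := by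
      rw [hudef]
      simp only [smul_dotProduct, dotProduct_smul, smul_eq_mul]
      rw [hAvAv]
      ring
    rw [h]
    by_cases hij : i = j
    · subst hij
      by_cases hm : μ i = 0
      · simp [hm]
      · simp only [if_pos rfl, if_neg hm, mul_one]
        rw [← hσsq i]
        field_simp [hσne i hm]
    · simp [hij]
  have hvnorm : ∀ j, vecNorm (v j) = 1 := by
    intro j; rw [vecNorm_eq_sqrt_dot, horth j j, if_pos rfl, Real.sqrt_one]
  have hunorm : ∀ j, vecNorm (u j) ≤ 1 := by
    intro j
    rw [vecNorm_eq_sqrt_dot, huu j j, if_pos rfl]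
    split_ifs with h
    · norm_num
    · norm_num
  -- row orthonormality
  set V : Matrix (Fin K) (Fin K) ℝ := Matrix.of fun k j => v j k with hVdef
  have hVtV : Vᵀ * V = 1 := by
    ext i j
    simpa [hVdef, mul_apply, one_apply, dotProduct] using horth i j
  have hVVt : V * Vᵀ = 1 := mul_eq_one_comm.mp hVtV
  have hrow : ∀ k l, (∑ j, v j k * v j l) = if k = l then 1 else 0 := by
    intro k l
    have h := congrFun (congrFun hVVt k) l
    simpa [hVdef, mul_apply, one_apply] using h
  have trace_eq : ∀ B : Matrix (Fin K) (Fin K) ℝ, B.trace = ∑ j, v j ⬝ᵥ (B *ᵥ v j) := by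
    intro B
    have h1 : ∀ j, v j ⬝ᵥ (B *ᵥ v j) = ∑ k, ∑ l, B k l * (v j k * v j l) := by
      intro j
      simp only [dotProduct, mulVec, Finset.mul_sum]
      exact Finset.sum_congr rfl fun k _ => Finset.sum_congr rfl fun l _ => by ring
    calc B.trace = ∑ k, B k k := rfl
      _ = ∑ k, ∑ l, B k l * (if k = l then 1 else 0) := by
          apply Finset.sum_congr rfl; intro k _
          rw [Finset.sum_eq_single k] <;> simp +contextual [eq_comm]
      _ = ∑ k, ∑ l, B k l * ∑ j, v j k * v j l := by
          simp_rw [hrow]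
      _ = ∑ k, ∑ l, ∑ j, B k l * (v j k * v j l) := by simp_rw [Finset.mul_sum]
      _ = ∑ k, ∑ j, ∑ l, B k l * (v j k * v j l) := by
          exact Finset.sum_congr rfl fun k _ => Finset.sum_comm
      _ = ∑ j, ∑ k, ∑ l, B k l * (v j k * v j l) := by exact Finset.sum_comm
      _ = ∑ j, v j ⬝ᵥ (B *ᵥ v j) := by
          exact (Finset.sum_congr rfl fun j _ => (h1 j).symm)
  have hXdXA : (Xd * X) * A = A := by rw [hAdef, ← Matrix.mul_assoc, hP2]
  have hXdXu : ∀ j, (Xd * X) *ᵥ u j = u j := by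
    intro j
    rw [hudef]
    simp only [mulVec_smul]
    congr 1
    rw [mulVec_mulVec, hXdXA]
  constructor
  · -- membership: construct the maximizer
    set P : Matrix (Fin K) (Fin d) ℝ := c • ∑ j, vecMulVec (v j) (u j) with hPdef
    refine ⟨(P * Xd)ᵀ, ?_, ?_⟩
    · have hPX : (P * Xd)ᵀᵀ * X = P := by
        rw [transpose_transpose, Matrix.mul_assoc, hPdef, Matrix.smul_mul, Matrix.sum_mul]
        congr 2
        funext j
        rw [vecMulVec_mul']
        congr 1
        rw [show u j ᵥ* (Xd * X) = (Xd * X)ᵀ *ᵥ u j from (mulVec_transpose _ _).symm,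
          hP4, hXdXu]
      rw [hPX]
      apply specNorm_le
      intro x hx
      have hPx : P *ᵥ x = c • ∑ j, (u j ⬝ᵥ x) • v j := by
        rw [hPdef, smul_mulVec, sum_mulVec']
        congr 1
        exact Finset.sum_congr rfl fun j _ => vecMulVec_mulVec' _ _ _
      set cf : Fin K → ℝ := fun j => u j ⬝ᵥ x with hcfdef
      have hcf : ∀ j, cf j = u j ⬝ᵥ x := fun j => rfl
      have hcf0 : ∀ j, μ j = 0 → cf j = 0 := by
        intro j h; rw [hcf]; simp [hu0 j h]
      have hdot : (P *ᵥ x) ⬝ᵥ (P *ᵥ x) = c ^ 2 * ∑ j, cf j ^ 2 := by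
        rw [hPx, smul_dotProduct, dotProduct_smul, smul_eq_mul, smul_eq_mul, ← mul_assoc,
          ← sq]
        congr 1
        rw [sum_dotProduct']
        simp_rw [smul_dotProduct, dotProduct_sum', dotProduct_smul, smul_eq_mul, horth,
          mul_ite, mul_one, mul_zero, Finset.sum_ite_eq, Finset.mem_univ, if_true]
        exact Finset.sum_congr rfl fun j _ => (sq (cf j)) ▸ rfl
      have hbessel : ∑ j, cf j ^ 2 ≤ x ⬝ᵥ x := by
        have h0 : 0 ≤ (x - ∑ j, cf j • u j) ⬝ᵥ (x - ∑ j, cf j • u j) := dot_self_nonneg' _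
        have hxs : x ⬝ᵥ (∑ j, cf j • u j) = ∑ j, cf j ^ 2 := by
          rw [dotProduct_sum']
          apply Finset.sum_congr rfl; intro j _
          rw [dotProduct_smul, smul_eq_mul, dotProduct_comm, ← hcf j]
          exact (sq (cf j)).symm
        have hsx : (∑ j, cf j • u j) ⬝ᵥ x = ∑ j, cf j ^ 2 := by
          rw [dotProduct_comm]; exact hxs
        have hterm : ∀ i j, cf i * (cf j * (u i ⬝ᵥ u j)) =
            if i = j then cf j ^ 2 * (if μ j = 0 then 0 else 1) else 0 := by
          intro i j
          rw [huu]
          by_cases hij : i = j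
          · subst hij
            by_cases hm : μ i = 0
            · simp [hm]
            · simp [hm, sq]
          · simp [hij]
        have hss : (∑ j, cf j • u j) ⬝ᵥ (∑ j, cf j • u j) = ∑ j, cf j ^ 2 := by
          rw [sum_dotProduct']
          simp_rw [smul_dotProduct, dotProduct_sum', dotProduct_smul, smul_eq_mul,
            Finset.mul_sum, hterm, Finset.sum_ite_eq, Finset.mem_univ, if_true]
          apply Finset.sum_congr rfl; intro i _
          by_cases hm : μ i = 0
          · simp [hm, hcf0 i hm]
          · simp [hm]
        rw [dotProduct_sub, sub_dotProduct, sub_dotProduct, hxs, hsx, hss] at h0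
        linarith
      have hx1 : x ⬝ᵥ x ≤ 1 := by
        rw [← vecNorm_sq]; nlinarith [vecNorm_nonneg' x]
      have hfin : (P *ᵥ x) ⬝ᵥ (P *ᵥ x) ≤ c ^ 2 := by
        rw [hdot]
        nlinarith [sq_nonneg c, hbessel, hx1,
          Finset.sum_nonneg (fun j (_ : j ∈ Finset.univ) => sq_nonneg (cf j))]
      rw [vecNorm_eq_sqrt_dot]
      calc Real.sqrt ((P *ᵥ x) ⬝ᵥ (P *ᵥ x)) ≤ Real.sqrt (c ^ 2) := Real.sqrt_le_sqrt hfin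
        _ = c := by rw [Real.sqrt_sq hc.le]
    · -- the value attained
      rw [transpose_transpose, Matrix.mul_assoc, ← hAdef]
      have htr : (P * A).trace = c * ∑ j, (vecMulVec (v j) (u j) * A).trace := by
        rw [hPdef, Matrix.smul_mul, trace_smul, Matrix.sum_mul, trace_sum, smul_eq_mul]
      rw [htr]
      congr 1
      rw [nuclearNorm]
      apply Finset.sum_congr rfl; intro j _
      rw [trace_vecMulVec_mul, hAvσ j, dotProduct_smul, smul_eq_mul, huu, if_pos rfl]
      by_cases hm : μ j = 0
      · rw [if_pos hm, mul_zero, hσ, hm, Real.sqrt_zero]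
      · rw [if_neg hm, mul_one]
  · -- upper bound
    rintro x ⟨Λ, hΛ, rfl⟩
    have hM : Λᵀ * Y = (Λᵀ * X) * A := by rw [← hY, ← Matrix.mul_assoc]
    rw [hM, trace_eq]
    have step : ∀ j, v j ⬝ᵥ (((Λᵀ * X) * A) *ᵥ v j) ≤ c * singVal A j := by
      intro j
      rw [← mulVec_mulVec, hAvσ j, mulVec_smul, dotProduct_smul, smul_eq_mul]
      have h1 : v j ⬝ᵥ ((Λᵀ * X) *ᵥ u j) ≤ c :=
        calc v j ⬝ᵥ ((Λᵀ * X) *ᵥ u j) ≤ |v j ⬝ᵥ ((Λᵀ * X) *ᵥ u j)| := le_abs_self _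
          _ ≤ vecNorm (v j) * vecNorm ((Λᵀ * X) *ᵥ u j) := abs_dot_le _ _
          _ = vecNorm ((Λᵀ * X) *ᵥ u j) := by rw [hvnorm, one_mul]
          _ ≤ specNorm (Λᵀ * X) * vecNorm (u j) := vecNorm_mulVec_le _ _
          _ ≤ c * 1 := mul_le_mul hΛ (hunorm j) (vecNorm_nonneg' _) hc.le
          _ = c := mul_one c
      have h2 := mul_le_mul_of_nonneg_left h1 (hσ0 j)
      linarith
    calc ∑ j, v j ⬝ᵥ (((Λᵀ * X) * A) *ᵥ v j) ≤ ∑ j, c * singVal A j :=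
        Finset.sum_le_sum fun j _ => step j
      _ = c * nuclearNorm A := by rw [nuclearNorm, Finset.mul_sum]
end

section
/- For deep linear networks with t > 0 and L ≥ 3: if X†Y has at least two distinct nonzero singular values, then t^{−(L−2)}‖X†Y‖_{S_{2/L}} > t^{−(L−2)}‖X†Y‖_*; that is, the primal optimal value P_lin(t) strictly exceeds the dual optimal value D_lin(t), so the duality gap is nonzero. -/
open Matrix

/-- Schatten-`p` quasi-norm of a real matrix: `(∑ σ_i(M)^p)^{1/p}`. -/
noncomputable def schattenNorm {a b : ℕ} (p : ℝ) (M : Matrix (Fin a) (Fin b) ℝ) : ℝ :=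
  (∑ j, singVal M j ^ p) ^ (1 / p)

lemma sum_rpow_gt {K : ℕ} (f : Fin K → ℝ) (hf : ∀ k, 0 ≤ f k) {p : ℝ}
    (hp : 0 < p) (hp1 : p < 1) {i j : Fin K} (hij : i ≠ j)
    (hi : 0 < f i) (hj : 0 < f j) :
    (∑ k, f k ^ p) ^ (1 / p) > ∑ k, f k := by
  set s : ℝ := ∑ k, f k with hs
  have hfle : ∀ k, f k ≤ s := fun k =>
    Finset.single_le_sum (fun k _ => hf k) (Finset.mem_univ k)
  have hilt : f i < s := by
    have h2 : f i + f j ≤ s := by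
      have he := Finset.add_sum_erase Finset.univ f (Finset.mem_univ i)
      calc f i + f j ≤ f i + ∑ k ∈ Finset.univ.erase i, f k := by
            refine add_le_add_right (Finset.single_le_sum (fun k _ => hf k) ?_) _
            exact Finset.mem_erase.mpr ⟨hij.symm, Finset.mem_univ j⟩
        _ = s := he
    linarith
  have hspos : 0 < s := hi.trans_le (hfle i)
  have hsplit : ∀ x : ℝ, 0 < x → x ^ p = x * x ^ (p - 1) := by
    intro x hx
    have h1 : x ^ p = x ^ (1 + (p - 1)) := by congr 1; ring
    rw [h1, Real.rpow_add hx, Real.rpow_one]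
  have key : s ^ p < ∑ k, f k ^ p := by
    have hle : ∀ k ∈ Finset.univ, f k * s ^ (p - 1) ≤ f k ^ p := by
      intro k _
      rcases eq_or_lt_of_le (hf k) with h0 | h0
      · simp [← h0, Real.zero_rpow hp.ne']
      · rw [hsplit _ h0]
        exact mul_le_mul_of_nonneg_left
          (Real.rpow_le_rpow_of_nonpos h0 (hfle k) (by linarith)) (hf k)
    have hlt : f i * s ^ (p - 1) < f i ^ p := by
      rw [hsplit _ hi]
      exact mul_lt_mul_of_pos_left
        (Real.rpow_lt_rpow_of_neg hi hilt (by linarith)) hi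
    calc s ^ p = s * s ^ (p - 1) := hsplit s hspos
      _ = ∑ k, f k * s ^ (p - 1) := by rw [hs, Finset.sum_mul]
      _ < ∑ k, f k ^ p := Finset.sum_lt_sum hle ⟨i, Finset.mem_univ i, hlt⟩
  have h1 : s = (s ^ p) ^ (1 / p) := by
    rw [← Real.rpow_mul hspos.le, mul_one_div, div_self hp.ne', Real.rpow_one]
  calc s = (s ^ p) ^ (1 / p) := h1
    _ < (∑ k, f k ^ p) ^ (1 / p) :=
      Real.rpow_lt_rpow (Real.rpow_nonneg hspos.le p) key (by positivity)

/-- For deep linear networks with `t > 0` and `L ≥ 3`: if `X†Y` has at least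
two distinct nonzero singular values, then
`t^{-(L-2)} ‖X†Y‖_{S_{2/L}} > t^{-(L-2)} ‖X†Y‖_*`, i.e. the primal value `P_lin(t)` strictly
exceeds the dual value `D_lin(t)`, so the duality gap is nonzero. -/
theorem duality_gap_nonzero_deep_linear
    (N d K L : ℕ) (hL : 3 ≤ L) (t : ℝ) (ht : 0 < t)
    (X : Matrix (Fin N) (Fin d) ℝ) (Y : Matrix (Fin N) (Fin K) ℝ)
    (Xd : Matrix (Fin d) (Fin N) ℝ) (hXd : IsMoorePenrose X Xd)
    (hdist : ∃ i j : Fin K, singVal (Xd * Y) i ≠ 0 ∧ singVal (Xd * Y) j ≠ 0 ∧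
      singVal (Xd * Y) i ≠ singVal (Xd * Y) j) :
    t ^ (-((L : ℝ) - 2)) * schattenNorm ((2 : ℝ) / L) (Xd * Y) >
      t ^ (-((L : ℝ) - 2)) * nuclearNorm (Xd * Y) := by
  obtain ⟨i, j, hi, hj, hij⟩ := hdist
  have hLpos : (0 : ℝ) < L := by positivity
  have hL2 : (2 : ℝ) < L := by exact_mod_cast (by omega : 2 < L)
  have hp : (0 : ℝ) < 2 / L := by positivity
  have hp1 : (2 : ℝ) / L < 1 := by rw [div_lt_one hLpos]; linarith
  have hne : i ≠ j := fun h => hij (by rw [h])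
  have hf : ∀ k, 0 ≤ singVal (Xd * Y) k := fun k => Real.sqrt_nonneg _
  have hgt := sum_rpow_gt (singVal (Xd * Y)) hf hp hp1 hne
    (lt_of_le_of_ne (hf i) (Ne.symm hi)) (lt_of_le_of_ne (hf j) (Ne.symm hj))
  exact mul_lt_mul_of_pos_left hgt (Real.rpow_pos_of_pos ht _)
end
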